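/- Let p be a prime, let Y be a finitely generated free ℤ_p-module equipped with a ℤ_p-linear automorphism σ satisfying σ^p = id, and suppose that the quotient Y/(σ−1)Y is isomorphic as an abelian group to (ℤ/pℤ)^r for some integer r ≥ 0. Then Y can be generated as a ℤ_p-module by (p−1)·r elements; equivalently, Y is a quotient of the free module ℤ_p^{(p−1)r}. -/

import Mathlib

/-- Let `p` be a prime, `Y` a finitely generated free `ℤ_p`-module with a `ℤ_p`-linear
automorphism `σ` satisfying `σ^p = 1`, and suppose `Y/(σ-1)Y ≅ (ℤ/pℤ)^r` as abelian groups.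
Then `Y` is a quotient of the free module `ℤ_p^((p-1)·r)`, i.e. there is a surjective
`ℤ_p`-linear map `ℤ_p^((p-1)·r) → Y`. -/
theorem stmt1 (p : ℕ) [Fact p.Prime] (Y : Type*) [AddCommGroup Y] [Module ℤ_[p] Y]
    [Module.Free ℤ_[p] Y] [Module.Finite ℤ_[p] Y]
    (σ : Module.End ℤ_[p] Y) (hbij : Function.Bijective σ) (hord : σ ^ p = 1)
    (r : ℕ)
    (hquot : Nonempty ((Y ⧸ LinearMap.range (σ - 1)) ≃+ (Fin r → ZMod p))) :
    ∃ f : (Fin ((p - 1) * r) → ℤ_[p]) →ₗ[ℤ_[p]] Y, Function.Surjective f := by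
  classical
  obtain ⟨e⟩ := hquot
  have hp : p.Prime := Fact.out
  have hp1pos : 0 < p - 1 := by have := hp.two_le; omega
  have hp1 : p - 1 + 1 = p := Nat.succ_pred_eq_of_pos hp.pos
  set T : Module.End ℤ_[p] Y := σ - 1 with hTdef
  have hTapp : ∀ x : Y, T x = σ x - x := fun x => rfl
  have hpne : (p : ℤ_[p]) ≠ 0 := Nat.cast_ne_zero.mpr hp.ne_zero
  choose y hy using fun i : Fin r =>
    Submodule.mkQ_surjective (LinearMap.range T) (e.symm (Pi.single i 1))
  -- injectivity of T = σ - 1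
  have hTinj : Function.Injective T := by
    rw [← LinearMap.ker_eq_bot, eq_bot_iff]
    intro x hx
    simp only [LinearMap.mem_ker] at hx
    have hσx : σ x = x := by
      have := hTapp x; rw [hx] at this; exact (sub_eq_zero.mp this.symm)
    have hfix : ∀ i : ℕ, (σ ^ i) x = x := by
      intro i; induction i with
      | zero => simp
      | succ n ih => rw [pow_succ, Module.End.mul_apply, hσx]; exact ih
    have hq : ((p : ℕ) • ((LinearMap.range T).mkQ x)) = 0 := by
      apply e.injective
      rw [map_nsmul, map_zero]
      funext i
      simp [ZMod.natCast_self]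
    have hmem : (p : ℤ_[p]) • x ∈ LinearMap.range T := by
      rw [← Submodule.Quotient.mk_eq_zero]
      have : (Submodule.Quotient.mk ((p : ℤ_[p]) • x) : Y ⧸ LinearMap.range T)
          = (p : ℤ_[p]) • (LinearMap.range T).mkQ x := rfl
      rw [this, Nat.cast_smul_eq_nsmul, hq]
    obtain ⟨z, hz⟩ := hmem
    have hNT : (∑ i ∈ Finset.range p, σ ^ i) * T = 0 := by
      rw [hTdef, geom_sum_mul, hord, sub_self]
    have h1 : (∑ i ∈ Finset.range p, σ ^ i) ((p : ℤ_[p]) • x) = 0 := by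
      rw [← hz, ← Module.End.mul_apply, hNT]; rfl
    have h2 : (∑ i ∈ Finset.range p, σ ^ i) x = (p : ℕ) • x := by
      rw [LinearMap.sum_apply]
      rw [Finset.sum_congr rfl fun i _ => hfix i]
      simp
    rw [map_smul, h2, ← Nat.cast_smul_eq_nsmul ℤ_[p], smul_smul,
      smul_eq_zero] at h1
    rcases h1 with h1 | h1
    · exact absurd h1 (mul_ne_zero hpne hpne)
    · simpa using h1
  -- the norm element is zero
  have hN0 : ∀ x : Y, (∑ i ∈ Finset.range p, σ ^ i) x = 0 := by
    intro x
    apply hTinj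
    have hTN : T * (∑ i ∈ Finset.range p, σ ^ i) = 0 := by
      rw [hTdef, mul_geom_sum, hord, sub_self]
    rw [← Module.End.mul_apply, hTN, map_zero]; rfl
  -- pointwise relation for σ^(p-1)
  have hσrel : ∀ x : Y, (σ ^ (p - 1)) x = -∑ k ∈ Finset.range (p - 1), (σ ^ k) x := by
    intro x
    have h := hN0 x
    have hr : Finset.range p = Finset.range (p - 1 + 1) := by rw [hp1]
    rw [LinearMap.sum_apply, hr, Finset.sum_range_succ] at h
    rw [add_comm] at h
    exact eq_neg_of_add_eq_zero_left h
  -- (σ-1)^(p-1) is divisible by p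
  have hTW : T * (∑ k ∈ Finset.range p, (p.choose (k + 1)) • T ^ k)
      = T * (∑ i ∈ Finset.range p, σ ^ i) := by
    have hσT : σ = T + 1 := by rw [hTdef, sub_add_cancel]
    have hrhs : T * (∑ i ∈ Finset.range p, σ ^ i) = σ ^ p - 1 := by
      rw [hTdef, mul_geom_sum]
    have hbin : σ ^ p = ∑ m ∈ Finset.range (p + 1), (p.choose m) • T ^ m := by
      rw [hσT, (Commute.one_right T).add_pow]
      refine Finset.sum_congr rfl fun m _ => ?_
      rw [one_pow, mul_one, nsmul_eq_mul, (Nat.cast_commute (p.choose m) (T ^ m)).eq]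
    have hlhs : T * (∑ k ∈ Finset.range p, (p.choose (k + 1)) • T ^ k)
        = ∑ k ∈ Finset.range p, (p.choose (k + 1)) • T ^ (k + 1) := by
      rw [Finset.mul_sum]
      refine Finset.sum_congr rfl fun k _ => ?_
      rw [mul_smul_comm, ← pow_succ']
    rw [hlhs, hrhs, hbin, Finset.sum_range_succ']
    simp
  have hW0 : ∀ x : Y, (∑ k ∈ Finset.range p, (p.choose (k + 1)) • T ^ k) x = 0 := by
    intro x
    apply hTinj
    rw [← Module.End.mul_apply, hTW, Module.End.mul_apply, hN0, map_zero]
  have hTP : ∀ x : Y, ∃ w : Y, (T ^ (p - 1)) x = (p : ℤ_[p]) • w := by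
    intro x
    have h := hW0 x
    have hr : Finset.range p = Finset.range (p - 1 + 1) := by rw [hp1]
    rw [LinearMap.sum_apply, hr, Finset.sum_range_succ] at h
    simp only [LinearMap.smul_apply] at h
    rw [hp1, Nat.choose_self, one_nsmul, add_comm] at h
    have hTP1 : (T ^ (p - 1)) x
        = -∑ k ∈ Finset.range (p - 1), (p.choose (k + 1)) • (T ^ k) x :=
      eq_neg_of_add_eq_zero_left h
    refine ⟨-∑ k ∈ Finset.range (p - 1), ((p.choose (k + 1)) / p) • (T ^ k) x, ?_⟩
    rw [hTP1, smul_neg, neg_inj, Finset.smul_sum]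
    refine Finset.sum_congr rfl fun k hk => ?_
    rw [Finset.mem_range] at hk
    have hdvd : p ∣ p.choose (k + 1) :=
      hp.dvd_choose_self (Nat.succ_ne_zero k) (by omega)
    rw [Nat.cast_smul_eq_nsmul, ← mul_nsmul', Nat.mul_div_cancel' hdvd]
  -- the candidate generators and their span
  have hppos : 0 < (p - 1) * r ∨ True := Or.inr trivial
  set v : Fin (p - 1) × Fin r → Y := fun ji => (σ ^ (ji.1 : ℕ)) (y ji.2) with hvdef
  set M : Submodule ℤ_[p] Y := Submodule.span ℤ_[p] (Set.range v) with hMdef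
  have hDM : ∀ j : ℕ, ∀ i : Fin r, (σ ^ j) (y i) ∈ M := by
    intro j
    induction j using Nat.strong_induction_on with
    | _ j ih =>
      intro i
      by_cases h : j < p - 1
      · exact Submodule.subset_span ⟨(⟨j, h⟩, i), rfl⟩
      · push_neg at h
        have hj : j - (p - 1) + (p - 1) = j := by omega
        have hsplit : (σ ^ j) (y i) = (σ ^ (j - (p - 1))) ((σ ^ (p - 1)) (y i)) := by
          rw [← Module.End.mul_apply, ← pow_add, hj]
        rw [hsplit, hσrel (y i), map_neg, map_sum]
        refine neg_mem (Submodule.sum_mem _ fun k hk => ?_)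
        rw [Finset.mem_range] at hk
        rw [← Module.End.mul_apply, ← pow_add]
        exact ih _ (by omega) i
  have hyM : ∀ i, y i ∈ M := fun i => by simpa using hDM 0 i
  have hMσ : ∀ m ∈ M, σ m ∈ M := by
    intro m hm
    induction hm using Submodule.span_induction with
    | mem x hx =>
      obtain ⟨⟨j, i⟩, rfl⟩ := hx
      show σ ((σ ^ (j : ℕ)) (y i)) ∈ M
      rw [← Module.End.mul_apply, ← pow_succ']
      exact hDM _ i
    | zero => simp
    | add a b _ _ ha hb => rw [map_add]; exact add_mem ha hb
    | smul c a _ ha => rw [map_smul]; exact Submodule.smul_mem _ _ ha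
  have hMT : ∀ m ∈ M, T m ∈ M := by
    intro m hm
    rw [hTapp]
    exact sub_mem (hMσ m hm) hm
  have hMTk : ∀ k : ℕ, ∀ m ∈ M, (T ^ k) m ∈ M := by
    intro k
    induction k with
    | zero => intro m hm; simpa using hm
    | succ n ih =>
      intro m hm
      rw [pow_succ, Module.End.mul_apply]
      exact ih _ (hMT m hm)
  -- every element is in M up to (σ-1)Y
  have hE0 : ∀ z : Y, ∃ s ∈ M, ∃ w : Y, z = s + T w := by
    intro z
    set c : Fin r → ZMod p := e ((LinearMap.range T).mkQ z) with hcdef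
    have hmk : (LinearMap.range T).mkQ (z - ∑ i, (c i).val • y i) = 0 := by
      apply e.injective
      rw [map_zero, map_sub, map_sub, map_sum, map_sum]
      have : ∀ i : Fin r, e ((LinearMap.range T).mkQ ((c i).val • y i))
          = Pi.single i (c i) := by
        intro i
        rw [map_nsmul, map_nsmul, hy i, AddEquiv.apply_symm_apply]
        funext j
        rcases eq_or_ne j i with rfl | h
        · simp [nsmul_eq_mul, ZMod.natCast_val, ZMod.cast_id]
        · simp [Pi.single_eq_of_ne h]
      rw [Finset.sum_congr rfl fun i _ => this i, Finset.univ_sum_single, ← hcdef,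
        sub_self]
    rw [Submodule.mkQ_apply, Submodule.Quotient.mk_eq_zero] at hmk
    obtain ⟨w, hw⟩ := hmk
    exact ⟨∑ i, (c i).val • y i, Submodule.sum_mem _ fun i _ =>
      Submodule.smul_of_tower_mem _ _ (hyM i), w, by rw [hw]; abel⟩
  have hK : ∀ k : ℕ, ∀ z : Y, ∃ s ∈ M, ∃ w : Y, z = s + (T ^ k) w := by
    intro k
    induction k with
    | zero => intro z; exact ⟨0, M.zero_mem, z, by simp⟩
    | succ n ih =>
      intro z
      obtain ⟨s, hs, w, rfl⟩ := ih z
      obtain ⟨s', hs', w', rfl⟩ := hE0 w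
      refine ⟨s + (T ^ n) s', add_mem hs (hMTk n s' hs'), w', ?_⟩
      rw [map_add, ← Module.End.mul_apply, ← pow_succ, add_assoc]
  -- Nakayama
  have hMtop : M = ⊤ := by
    have hjac : Ideal.span {(p : ℤ_[p])} ≤ Ideal.jacobson ⊥ := by
      rw [IsLocalRing.jacobson_eq_maximalIdeal ⊥ bot_ne_top,
        ← PadicInt.maximalIdeal_eq_span_p]
    have htop : (⊤ : Submodule ℤ_[p] (Y ⧸ M))
        ≤ Ideal.span {(p : ℤ_[p])} • (⊤ : Submodule ℤ_[p] (Y ⧸ M)) := by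
      intro q _
      obtain ⟨x, rfl⟩ := Submodule.mkQ_surjective M q
      obtain ⟨s, hs, w, rfl⟩ := hK (p - 1) x
      obtain ⟨w2, hw2⟩ := hTP w
      rw [map_add, hw2, map_smul]
      have hs0 : M.mkQ s = 0 := by
        rw [Submodule.mkQ_apply, Submodule.Quotient.mk_eq_zero]; exact hs
      rw [hs0, zero_add]
      exact Submodule.smul_mem_smul (Ideal.subset_span rfl) Submodule.mem_top
    have hbot := Submodule.eq_bot_of_le_smul_of_le_jacobson_bot
      (Ideal.span {(p : ℤ_[p])}) (⊤ : Submodule ℤ_[p] (Y ⧸ M))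
      Module.Finite.fg_top htop hjac
    rw [← Submodule.Quotient.subsingleton_iff]
    refine subsingleton_of_forall_eq 0 fun q => ?_
    have : q ∈ (⊥ : Submodule ℤ_[p] (Y ⧸ M)) := hbot ▸ Submodule.mem_top
    simpa using this
  -- build the surjection
  refine ⟨Fintype.linearCombination ℤ_[p] (v ∘ finProdFinEquiv.symm), ?_⟩
  rw [← LinearMap.range_eq_top, Fintype.range_linearCombination,
    finProdFinEquiv.symm.surjective.range_comp v, ← hMdef, hMtop]
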